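/- Let k, L be integers with 2 ≤ L ≤ k and L dividing k, and let δ : Fin k → ℝ satisfy ∑_{i=1}^k δ_i = 0. Let f be a uniformly random balanced L-coloring of [k] and set Z_r = ∑_{i : f(i)=r} δ_i for r ∈ [L]. Then for every r ∈ [L]: E[Z_r] = 0 and Var(Z_r) = E[Z_r²] = (1/L)·‖δ‖₂²·(1 − 1/L + (L−1)/(L(k−1))) ≥ ‖δ‖₂²/(2L). Consequently, E[‖Z‖₂²] = ∑_{r=1}^L E[Z_r²] ≥ ‖δ‖₂²/2. -/

import Mathlib

open scoped BigOperators Classical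

/-- The finite set of balanced `L`-colorings of `[k]`: functions `Fin k → Fin L` each of
whose fibers has exactly `k / L` elements. -/
noncomputable def balancedColorings (k L : ℕ) : Finset (Fin k → Fin L) :=
  Finset.univ.filter fun f =>
    ∀ r : Fin L, (Finset.univ.filter fun i => f i = r).card = k / L

/-- For a coloring `f` and weights `δ`, `partSum δ f r = ∑_{i : f i = r} δ_i`. -/
noncomputable def partSum {k L : ℕ} (δ : Fin k → ℝ) (f : Fin k → Fin L) (r : Fin L) : ℝ :=
  ∑ i ∈ Finset.univ.filter (fun i => f i = r), δ i

namespace RFM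

open Finset

noncomputable def ind {k L : ℕ} (f : Fin k → Fin L) (i : Fin k) (r : Fin L) : ℝ :=
  if f i = r then 1 else 0

variable {k L : ℕ}

lemma mem_bc {f : Fin k → Fin L} :
    f ∈ balancedColorings k L ↔ ∀ r : Fin L,
      (Finset.univ.filter fun i => f i = r).card = k / L := by
  simp [balancedColorings]

lemma comp_mem (σ : Equiv.Perm (Fin k)) {f : Fin k → Fin L}
    (hf : f ∈ balancedColorings k L) : f ∘ σ ∈ balancedColorings k L := by
  rw [mem_bc] at hf ⊢
  intro r
  rw [← hf r]
  apply Finset.card_bij (fun i _ => σ i)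
  · intro a ha; simp only [mem_filter, mem_univ, true_and, Function.comp_apply] at ha ⊢; exact ha
  · intro a _ b _ h; exact σ.injective h
  · intro b hb
    refine ⟨σ.symm b, ?_, by simp⟩
    simp only [mem_filter, mem_univ, true_and, Function.comp_apply] at hb ⊢
    simpa using hb

lemma sum_comp (σ : Equiv.Perm (Fin k)) (F : (Fin k → Fin L) → ℝ) :
    ∑ f ∈ balancedColorings k L, F (f ∘ σ) = ∑ f ∈ balancedColorings k L, F f := by
  refine Finset.sum_equiv ⟨fun f => f ∘ σ, fun f => f ∘ σ.symm,
      fun f => by ext x; simp, fun f => by ext x; simp⟩ (fun f => ?_) (fun f _ => rfl)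
  constructor
  · exact fun h => comp_mem σ h
  · intro h
    have := comp_mem σ.symm h
    have heq : (f ∘ σ) ∘ (σ.symm : Fin k → Fin k) = f := by ext x; simp
    simp only [Equiv.coe_fn_mk] at this
    rwa [heq] at this

lemma S1_const (r : Fin L) (i j : Fin k) :
    ∑ f ∈ balancedColorings k L, ind f i r = ∑ f ∈ balancedColorings k L, ind f j r := by
  have h := sum_comp (Equiv.swap i j) (fun f => ind f j r)
  simpa [ind, Function.comp, Equiv.swap_apply_right] using h

lemma S2_const (r : Fin L) {i j i' j' : Fin k} (hij : i ≠ j) (hij' : i' ≠ j') :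
    ∑ f ∈ balancedColorings k L, ind f i r * ind f j r
      = ∑ f ∈ balancedColorings k L, ind f i' r * ind f j' r := by
  set σ₁ := Equiv.swap i i' with hσ₁
  have h1 : σ₁ j' ≠ i := by
    rw [show i = σ₁ i' from (Equiv.swap_apply_right i i').symm]
    exact fun h => hij' (σ₁.injective h.symm)
  set σ : Equiv.Perm (Fin k) := σ₁.trans (Equiv.swap j (σ₁ j')) with hσ
  have hi : σ i' = i := by
    show Equiv.swap j (σ₁ j') (σ₁ i') = i
    rw [show σ₁ i' = i from Equiv.swap_apply_right i i']
    exact Equiv.swap_apply_of_ne_of_ne hij (Ne.symm h1)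
  have hj : σ j' = j := by
    show Equiv.swap j (σ₁ j') (σ₁ j') = j
    exact Equiv.swap_apply_right _ _
  have h := sum_comp σ (fun f => ind f i' r * ind f j' r)
  simpa [ind, Function.comp, hi, hj] using h

lemma bc_nonempty (hL0 : 0 < L) {m : ℕ} (hkm : k = L * m) :
    (balancedColorings k L).Nonempty := by
  have e : Fin k ≃ Fin L × Fin m := (finCongr hkm).trans finProdFinEquiv.symm
  refine ⟨fun i => (e i).1, ?_⟩
  rw [mem_bc]
  intro r
  have hdiv : k / L = m := by rw [hkm]; exact Nat.mul_div_cancel_left m hL0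
  rw [hdiv]
  have : (Finset.univ.filter fun i => (e i).1 = r).card = (Finset.univ : Finset (Fin m)).card := by
    apply Finset.card_bij (fun i _ => (e i).2)
    · intro a _; exact mem_univ _
    · intro a ha b hb hab
      simp only [mem_filter, mem_univ, true_and] at ha hb
      apply e.injective
      exact Prod.ext (ha.trans hb.symm) hab
    · intro b _
      refine ⟨e.symm (r, b), ?_, by simp⟩
      simp
  rw [this, Finset.card_univ, Fintype.card_fin]

end RFM

/-- Moments of `Z_r = ∑_{i : f i = r} δ_i` for a uniformly random balanced `L`-coloring `f`:
`E[Z_r] = 0`, `E[Z_r²] = (1/L)·‖δ‖₂²·(1 − 1/L + (L−1)/(L(k−1))) ≥ ‖δ‖₂²/(2L)`, and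
consequently `E[‖Z‖₂²] ≥ ‖δ‖₂²/2`. -/
theorem random_flattening_moments (k L : ℕ) (hL2 : 2 ≤ L) (hLk : L ≤ k) (hdvd : L ∣ k)
    (δ : Fin k → ℝ) (hδsum : ∑ i, δ i = 0) :
    (∀ r : Fin L,
      (∑ f ∈ balancedColorings k L, partSum δ f r) / ((balancedColorings k L).card : ℝ) = 0 ∧
      (∑ f ∈ balancedColorings k L, partSum δ f r ^ 2) / ((balancedColorings k L).card : ℝ)
        = (1 / L) * (∑ i, δ i ^ 2) * (1 - 1 / L + (L - 1) / (L * (k - 1))) ∧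
      (∑ i, δ i ^ 2) / (2 * L)
        ≤ (∑ f ∈ balancedColorings k L, partSum δ f r ^ 2)
            / ((balancedColorings k L).card : ℝ))
    ∧ (∑ i, δ i ^ 2) / 2
        ≤ (∑ f ∈ balancedColorings k L, ∑ r, partSum δ f r ^ 2)
            / ((balancedColorings k L).card : ℝ) := by
  classical
  obtain ⟨m, hkm⟩ := hdvd
  have hL0 : 0 < L := by omega
  have hk2 : 2 ≤ k := hL2.trans hLk
  have hm0 : 0 < m := by
    rcases Nat.eq_zero_or_pos m with h | h
    · subst h; rw [Nat.mul_zero] at hkm; omega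
    · exact h
  have hdiv : k / L = m := by rw [hkm]; exact Nat.mul_div_cancel_left m hL0
  set B := balancedColorings k L with hBdef
  have hNne : B.Nonempty := RFM.bc_nonempty hL0 hkm
  have hNpos : 0 < (B.card : ℝ) := by exact_mod_cast Finset.card_pos.mpr hNne
  set N := (B.card : ℝ) with hNdef
  have hN0 : N ≠ 0 := ne_of_gt hNpos
  have hk0 : 0 < k := by omega
  set i₀ : Fin k := ⟨0, by omega⟩ with hi0
  set i₁ : Fin k := ⟨1, by omega⟩ with hi1
  have h01 : i₀ ≠ i₁ := by simp [hi0, hi1, Fin.ext_iff]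
  -- per-coloring facts
  have hfib : ∀ f ∈ B, ∀ r : Fin L, ∑ i, RFM.ind f i r = (m : ℝ) := by
    intro f hf r
    have h := (RFM.mem_bc.mp hf) r
    simp only [RFM.ind]
    rw [Finset.sum_boole, h, hdiv]
  have hind_sq : ∀ (f : Fin k → Fin L) i r, RFM.ind f i r * RFM.ind f i r = RFM.ind f i r := by
    intro f i r; by_cases h : f i = r <;> simp [RFM.ind, h]
  have hps : ∀ (f : Fin k → Fin L) r, partSum δ f r = ∑ i, δ i * RFM.ind f i r := by
    intro f r
    rw [partSum, Finset.sum_filter]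
    refine Finset.sum_congr rfl fun i _ => ?_
    by_cases h : f i = r <;> simp [RFM.ind, h]
  set s1 : Fin L → ℝ := fun r => ∑ f ∈ B, RFM.ind f i₀ r with hs1def
  set s2 : Fin L → ℝ := fun r => ∑ f ∈ B, RFM.ind f i₀ r * RFM.ind f i₁ r with hs2def
  have hs1const : ∀ (r : Fin L) (i : Fin k), ∑ f ∈ B, RFM.ind f i r = s1 r :=
    fun r i => RFM.S1_const r i i₀
  have hs2const : ∀ (r : Fin L) (i j : Fin k), i ≠ j →
      ∑ f ∈ B, RFM.ind f i r * RFM.ind f j r = s2 r :=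
    fun r i j hij => RFM.S2_const r hij h01
  -- first moment
  have hM1 : ∀ r : Fin L, ∑ f ∈ B, partSum δ f r = s1 r * ∑ i, δ i := by
    intro r
    calc ∑ f ∈ B, partSum δ f r = ∑ f ∈ B, ∑ i, δ i * RFM.ind f i r :=
          Finset.sum_congr rfl fun f _ => hps f r
      _ = ∑ i, ∑ f ∈ B, δ i * RFM.ind f i r := Finset.sum_comm
      _ = ∑ i, δ i * s1 r := by
          refine Finset.sum_congr rfl fun i _ => ?_
          rw [← Finset.mul_sum, hs1const r i]
      _ = s1 r * ∑ i, δ i := by rw [← Finset.sum_mul, mul_comm]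
  have first : ∀ r : Fin L, (∑ f ∈ B, partSum δ f r) / N = 0 := by
    intro r; rw [hM1 r, hδsum, mul_zero, zero_div]
  -- value of s1
  have hs1val : ∀ r : Fin L, (k : ℝ) * s1 r = N * m := by
    intro r
    have h1 : ∑ i : Fin k, (∑ f ∈ B, RFM.ind f i r) = N * m := by
      rw [Finset.sum_comm]
      calc ∑ f ∈ B, ∑ i, RFM.ind f i r = ∑ f ∈ B, (m : ℝ) :=
            Finset.sum_congr rfl fun f hf => hfib f hf r
        _ = N * m := by rw [Finset.sum_const, nsmul_eq_mul]
    have h2 : ∑ i : Fin k, (∑ f ∈ B, RFM.ind f i r) = (k : ℝ) * s1 r := by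
      calc ∑ i : Fin k, (∑ f ∈ B, RFM.ind f i r) = ∑ _i : Fin k, s1 r :=
            Finset.sum_congr rfl fun i _ => hs1const r i
        _ = (k : ℝ) * s1 r := by
            rw [Finset.sum_const, Finset.card_univ, Fintype.card_fin, nsmul_eq_mul]
    rw [← h2, h1]
  -- value of s2
  have hs2val : ∀ r : Fin L, (k : ℝ) * ((k : ℝ) - 1) * s2 r = N * m * ((m : ℝ) - 1) := by
    intro r
    have h1 : ∑ i : Fin k, ∑ j ∈ Finset.univ.erase i, (∑ f ∈ B, RFM.ind f i r * RFM.ind f j r)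
        = (k : ℝ) * ((k : ℝ) - 1) * s2 r := by
      have he : ∀ i : Fin k, ∑ j ∈ Finset.univ.erase i,
          (∑ f ∈ B, RFM.ind f i r * RFM.ind f j r) = ((k : ℝ) - 1) * s2 r := by
        intro i
        calc ∑ j ∈ Finset.univ.erase i, (∑ f ∈ B, RFM.ind f i r * RFM.ind f j r)
            = ∑ j ∈ Finset.univ.erase i, s2 r := by
              refine Finset.sum_congr rfl fun j hj => ?_
              exact hs2const r i j (Ne.symm (Finset.mem_erase.mp hj).1)
          _ = ((k : ℝ) - 1) * s2 r := by
              rw [Finset.sum_const, Finset.card_erase_of_mem (Finset.mem_univ i),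
                Finset.card_univ, Fintype.card_fin, nsmul_eq_mul, Nat.cast_sub hk0,
                Nat.cast_one]
      calc ∑ i : Fin k, ∑ j ∈ Finset.univ.erase i, (∑ f ∈ B, RFM.ind f i r * RFM.ind f j r)
          = ∑ _i : Fin k, ((k : ℝ) - 1) * s2 r := Finset.sum_congr rfl fun i _ => he i
        _ = (k : ℝ) * (((k : ℝ) - 1) * s2 r) := by
            rw [Finset.sum_const, Finset.card_univ, Fintype.card_fin, nsmul_eq_mul]
        _ = (k : ℝ) * ((k : ℝ) - 1) * s2 r := by ring
    have h2 : ∑ i : Fin k, ∑ j ∈ Finset.univ.erase i, (∑ f ∈ B, RFM.ind f i r * RFM.ind f j r)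
        = N * m * ((m : ℝ) - 1) := by
      have hsw : ∑ i : Fin k, ∑ j ∈ Finset.univ.erase i, (∑ f ∈ B, RFM.ind f i r * RFM.ind f j r)
          = ∑ f ∈ B, ∑ i : Fin k, ∑ j ∈ Finset.univ.erase i, RFM.ind f i r * RFM.ind f j r := by
        rw [Finset.sum_comm]
        refine Finset.sum_congr rfl fun f _ => ?_
        exact Finset.sum_comm
      rw [hsw]
      calc ∑ f ∈ B, ∑ i : Fin k, ∑ j ∈ Finset.univ.erase i, RFM.ind f i r * RFM.ind f j r
          = ∑ f ∈ B, ((m : ℝ) * m - m) := by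
            refine Finset.sum_congr rfl fun f hf => ?_
            have hrow : ∀ i : Fin k, ∑ j ∈ Finset.univ.erase i, RFM.ind f i r * RFM.ind f j r
                = RFM.ind f i r * (m : ℝ) - RFM.ind f i r := by
              intro i
              rw [← Finset.mul_sum, Finset.sum_erase_eq_sub (Finset.mem_univ i), hfib f hf r,
                mul_sub, hind_sq]
            rw [Finset.sum_congr rfl fun i _ => hrow i, Finset.sum_sub_distrib,
              ← Finset.sum_mul, hfib f hf r]
        _ = N * m * ((m : ℝ) - 1) := by rw [Finset.sum_const, nsmul_eq_mul]; ring
    rw [← h1, h2]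
  -- second moment numerator
  have hM2 : ∀ r : Fin L, ∑ f ∈ B, partSum δ f r ^ 2 = (s1 r - s2 r) * ∑ i, δ i ^ 2 := by
    intro r
    have hexp : ∀ f : Fin k → Fin L, partSum δ f r ^ 2
        = ∑ i, ∑ j, (δ i * δ j) * (RFM.ind f i r * RFM.ind f j r) := by
      intro f
      rw [hps, sq, Finset.sum_mul_sum]
      exact Finset.sum_congr rfl fun i _ => Finset.sum_congr rfl fun j _ => by ring
    calc ∑ f ∈ B, partSum δ f r ^ 2
        = ∑ f ∈ B, ∑ i, ∑ j, (δ i * δ j) * (RFM.ind f i r * RFM.ind f j r) :=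
          Finset.sum_congr rfl fun f _ => hexp f
      _ = ∑ i, ∑ j, ∑ f ∈ B, (δ i * δ j) * (RFM.ind f i r * RFM.ind f j r) := by
          rw [Finset.sum_comm]
          exact Finset.sum_congr rfl fun i _ => Finset.sum_comm
      _ = ∑ i, ∑ j, (δ i * δ j) * (∑ f ∈ B, RFM.ind f i r * RFM.ind f j r) := by
          refine Finset.sum_congr rfl fun i _ => Finset.sum_congr rfl fun j _ => ?_
          rw [Finset.mul_sum]
      _ = ∑ i : Fin k, ((δ i * δ i) * s1 r + ∑ j ∈ Finset.univ.erase i, (δ i * δ j) * s2 r) := by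
          refine Finset.sum_congr rfl fun i _ => ?_
          rw [← Finset.sum_erase_add _ _ (Finset.mem_univ i)]
          have hd : ∑ f ∈ B, RFM.ind f i r * RFM.ind f i r = s1 r := by
            rw [Finset.sum_congr rfl fun f _ => hind_sq f i r, hs1const r i]
          rw [hd, add_comm]
          congr 1
          refine Finset.sum_congr rfl fun j hj => ?_
          rw [hs2const r i j (Ne.symm (Finset.mem_erase.mp hj).1)]
      _ = (s1 r - s2 r) * ∑ i, δ i ^ 2 := by
          rw [Finset.sum_add_distrib]
          have ha : ∑ i : Fin k, (δ i * δ i) * s1 r = s1 r * ∑ i, δ i ^ 2 := by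
            rw [← Finset.sum_mul, mul_comm]
            congr 1
            exact Finset.sum_congr rfl fun i _ => by ring
          have hb : ∑ i : Fin k, ∑ j ∈ Finset.univ.erase i, (δ i * δ j) * s2 r
              = -(s2 r * ∑ i, δ i ^ 2) := by
            have hrow : ∀ i : Fin k, ∑ j ∈ Finset.univ.erase i, (δ i * δ j) * s2 r
                = -(δ i ^ 2) * s2 r := by
              intro i
              rw [← Finset.sum_mul, ← Finset.mul_sum,
                Finset.sum_erase_eq_sub (Finset.mem_univ i), hδsum]
              ring
            rw [Finset.sum_congr rfl fun i _ => hrow i, ← Finset.sum_mul, Finset.sum_neg_distrib]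
            ring
          rw [ha, hb]; ring
  -- casts
  have hkR : (k : ℝ) = (L : ℝ) * m := by exact_mod_cast hkm
  have hkR0 : (k : ℝ) ≠ 0 := Nat.cast_ne_zero.mpr (by omega)
  have hk2R : (2 : ℝ) ≤ (k : ℝ) := by exact_mod_cast hk2
  have hk1pos : (0 : ℝ) < (k : ℝ) - 1 := by linarith
  have hk1ne : (k : ℝ) - 1 ≠ 0 := ne_of_gt hk1pos
  have hLR0 : (L : ℝ) ≠ 0 := Nat.cast_ne_zero.mpr (by omega)
  have hmR0 : (m : ℝ) ≠ 0 := Nat.cast_ne_zero.mpr (by omega)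
  have h2L : (2 : ℝ) ≤ (L : ℝ) := by exact_mod_cast hL2
  have hscal : ∀ r : Fin L, (s1 r - s2 r) / N
      = 1 / (L : ℝ) * (1 - 1 / (L : ℝ) + ((L : ℝ) - 1) / ((L : ℝ) * ((k : ℝ) - 1))) := by
    intro r
    have e1 : s1 r = N * m / k := by rw [eq_div_iff hkR0]; linear_combination hs1val r
    have e2 : s2 r = N * m * ((m : ℝ) - 1) / ((k : ℝ) * ((k : ℝ) - 1)) := by
      rw [eq_div_iff (mul_ne_zero hkR0 hk1ne)]; linear_combination hs2val r
    have hLm1 : (L : ℝ) * (m : ℝ) - 1 ≠ 0 := by rw [← hkR]; exact hk1ne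
    rw [e1, e2, hkR]
    have hmL1 : (m : ℝ) * (L : ℝ) - 1 ≠ 0 := by rw [mul_comm]; exact hLm1
    field_simp
    ring
  have second : ∀ r : Fin L,
      (∑ f ∈ B, partSum δ f r ^ 2) / N
        = 1 / (L : ℝ) * (∑ i, δ i ^ 2)
            * (1 - 1 / (L : ℝ) + ((L : ℝ) - 1) / ((L : ℝ) * ((k : ℝ) - 1))) := by
    intro r
    rw [hM2 r]
    calc (s1 r - s2 r) * (∑ i, δ i ^ 2) / N
        = (s1 r - s2 r) / N * (∑ i, δ i ^ 2) := by ring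
      _ = _ := by rw [hscal r]; ring
  have hQ0 : 0 ≤ ∑ i, δ i ^ 2 := Finset.sum_nonneg fun i _ => sq_nonneg _
  have hC : 1 / 2 ≤ 1 - 1 / (L : ℝ) + ((L : ℝ) - 1) / ((L : ℝ) * ((k : ℝ) - 1)) := by
    have hLpos : (0 : ℝ) < (L : ℝ) := by linarith
    have hinv : 1 / (L : ℝ) ≤ 1 / 2 := by
      rw [div_le_div_iff₀ hLpos (by norm_num)]; linarith
    have hfrac : 0 ≤ ((L : ℝ) - 1) / ((L : ℝ) * ((k : ℝ) - 1)) :=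
      div_nonneg (by linarith) (mul_nonneg hLpos.le hk1pos.le)
    linarith
  have third : ∀ r : Fin L,
      (∑ i, δ i ^ 2) / (2 * (L : ℝ)) ≤ (∑ f ∈ B, partSum δ f r ^ 2) / N := by
    intro r
    rw [second r]
    have key : (∑ i, δ i ^ 2) / (2 * (L : ℝ))
        = 1 / (L : ℝ) * (∑ i, δ i ^ 2) * (1 / 2) := by
      rw [div_eq_mul_inv, mul_inv]
      ring
    rw [key]
    exact mul_le_mul_of_nonneg_left hC (by positivity)
  refine ⟨fun r => ⟨first r, second r, third r⟩, ?_⟩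
  have hswap : ∑ f ∈ B, ∑ r : Fin L, partSum δ f r ^ 2
      = ∑ r : Fin L, ∑ f ∈ B, partSum δ f r ^ 2 := Finset.sum_comm
  have hstart : (∑ i, δ i ^ 2) / 2 = ∑ _r : Fin L, (∑ i, δ i ^ 2) / (2 * (L : ℝ)) := by
    rw [Finset.sum_const, Finset.card_univ, Fintype.card_fin, nsmul_eq_mul]
    field_simp
  calc (∑ i, δ i ^ 2) / 2
      = ∑ _r : Fin L, (∑ i, δ i ^ 2) / (2 * (L : ℝ)) := hstart
    _ ≤ ∑ r : Fin L, (∑ f ∈ B, partSum δ f r ^ 2) / N :=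
        Finset.sum_le_sum fun r _ => third r
    _ = (∑ r : Fin L, ∑ f ∈ B, partSum δ f r ^ 2) / N := (Finset.sum_div _ _ _).symm
    _ = (∑ f ∈ B, ∑ r : Fin L, partSum δ f r ^ 2) / N := by rw [hswap]
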